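/- Let h : ℝ → ℝ be monotone and B = ∏ j [v̲ j, v̄ j] a box. For each neuron i, the estimated output interval [h(z̲ i + θ i), h(z̄ i + θ i)] from Theorem 1 equals exactly the interval [min over B of h(∑ j W i j v j + θ i), max over B of h(∑ j W i j v j + θ i)]; however, the product box ∏ i [h(z̲ i + θ i), h(z̄ i + θ i)] may strictly contain the image of B under the layer (the estimate is generally not exact as a set in ℝ^m for m ≥ 2). -/

import Mathlib

theorem interval_estimate_componentwise_exact_but_conservative
    (m n : ℕ) (h : ℝ → ℝ)
    (hmono : ∀ v₁ v₂ : ℝ, v₁ ≤ v₂ → h v₁ ≤ h v₂)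
    (W : Matrix (Fin m) (Fin n) ℝ) (θ : Fin m → ℝ)
    (vlo vhi : Fin n → ℝ) (hle : ∀ j, vlo j ≤ vhi j) :
    (∀ i : Fin m,
      IsLeast {y : ℝ | ∃ v : Fin n → ℝ, (∀ j, vlo j ≤ v j ∧ v j ≤ vhi j) ∧
          y = h ((∑ j, W i j * v j) + θ i)}
        (h ((∑ j, if W i j ≥ 0 then W i j * vlo j else W i j * vhi j) + θ i)) ∧
      IsGreatest {y : ℝ | ∃ v : Fin n → ℝ, (∀ j, vlo j ≤ v j ∧ v j ≤ vhi j) ∧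
          y = h ((∑ j, W i j * v j) + θ i)}
        (h ((∑ j, if W i j ≥ 0 then W i j * vhi j else W i j * vlo j) + θ i))) ∧
    (∃ (h' : ℝ → ℝ) (W' : Matrix (Fin 2) (Fin 1) ℝ) (θ' : Fin 2 → ℝ)
        (a b : Fin 1 → ℝ),
      (∀ v₁ v₂ : ℝ, v₁ ≤ v₂ → h' v₁ ≤ h' v₂) ∧ (∀ j, a j ≤ b j) ∧
      ((fun v : Fin 1 → ℝ => fun i => h' ((W'.mulVec v) i + θ' i)) ''
          {v | ∀ j, a j ≤ v j ∧ v j ≤ b j}) ⊂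
        {y : Fin 2 → ℝ | ∀ i,
          h' ((∑ j, if W' i j ≥ 0 then W' i j * a j else W' i j * b j) + θ' i) ≤ y i ∧
          y i ≤ h' ((∑ j, if W' i j ≥ 0 then W' i j * b j else W' i j * a j) + θ' i)}) := by
  constructor
  · intro i
    constructor
    · constructor
      · refine ⟨fun j => if W i j ≥ 0 then vlo j else vhi j, fun j => ?_, ?_⟩
        · by_cases hw : W i j ≥ 0 <;> simp [hw, hle j]
        · congr 2
          apply Finset.sum_congr rfl
          intro j _
          by_cases hw : W i j ≥ 0 <;> simp [hw]
      · rintro y ⟨v, hv, rfl⟩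
        apply hmono
        apply add_le_add_left
        apply Finset.sum_le_sum
        intro j _
        by_cases hw : W i j ≥ 0
        · simp only [hw, if_pos]
          exact mul_le_mul_of_nonneg_left (hv j).1 hw
        · simp only [hw, if_neg, not_false_iff]
          exact mul_le_mul_of_nonpos_left (hv j).2 (le_of_not_ge hw)
    · constructor
      · refine ⟨fun j => if W i j ≥ 0 then vhi j else vlo j, fun j => ?_, ?_⟩
        · by_cases hw : W i j ≥ 0 <;> simp [hw, hle j]
        · congr 2
          apply Finset.sum_congr rfl
          intro j _
          by_cases hw : W i j ≥ 0 <;> simp [hw]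
      · rintro y ⟨v, hv, rfl⟩
        apply hmono
        apply add_le_add_left
        apply Finset.sum_le_sum
        intro j _
        by_cases hw : W i j ≥ 0
        · simp only [hw, if_pos]
          exact mul_le_mul_of_nonneg_left (hv j).2 hw
        · simp only [hw, if_neg, not_false_iff]
          exact mul_le_mul_of_nonpos_left (hv j).1 (le_of_not_ge hw)
  · refine ⟨id, fun _ _ => 1, 0, 0, 1, fun _ _ hv => hv, fun _ => zero_le_one, ?_⟩
    rw [Set.ssubset_def]
    constructor
    · rintro y ⟨v, hv, rfl⟩
      intro i
      simp only [Matrix.mulVec, dotProduct, Fin.sum_univ_one, id,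
        Pi.zero_apply, Pi.one_apply, one_mul, mul_zero, mul_one, add_zero, ge_iff_le,
        zero_le_one, if_pos]
      exact hv 0
    · intro hsup
      have := hsup (show (![0, 1] : Fin 2 → ℝ) ∈ _ by
        intro i
        simp only [Fin.sum_univ_one, id, Pi.zero_apply, Pi.one_apply, one_mul,
          mul_zero, mul_one, add_zero, ge_iff_le, zero_le_one, if_pos]
        fin_cases i <;> norm_num)
      obtain ⟨v, _, heq⟩ := this
      have h0 := congrFun heq 0
      have h1 := congrFun heq 1
      simp only [Matrix.mulVec, dotProduct, Fin.sum_univ_one, id,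
        Pi.zero_apply, one_mul, add_zero] at h0 h1
      rw [h0] at h1
      norm_num at h1
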